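/- arXiv:2110.11775 — 4 statements merged into one kernel-verified Lean document; each statement's English description precedes it below -/
import Mathlib

section
/- Lemma 1 (KKT relation, interior case): Let M, Γ, S, c, a be real numbers with M > 0 and c > 0, and let x, y, λ, υ be nonnegative real numbers satisfying the KKT conditions: −1 + x − y + (λ − υ)·M = 0; x·(a − 1) = 0; y·a = 0; λ·(S/c − Γ + M·(a − 1)) = 0; and υ·(Γ − M·a − S/c) = 0. If 0 < a < 1, then λ > 0, υ = 0, and S/c = Γ + M·(1 − a). -/
/-- Lemma 1 (KKT relation, interior case). -/
theorem kkt_interior_case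
    (M Γ S c a x y lam υ : ℝ)
    (hM : 0 < M) (hc : 0 < c)
    (hx : 0 ≤ x) (hy : 0 ≤ y) (hlam : 0 ≤ lam) (hυ : 0 ≤ υ)
    (hstat : -1 + x - y + (lam - υ) * M = 0)
    (hcs_x : x * (a - 1) = 0)
    (hcs_y : y * a = 0)
    (hcs_lam : lam * (S / c - Γ + M * (a - 1)) = 0)
    (hcs_υ : υ * (Γ - M * a - S / c) = 0)
    (ha0 : 0 < a) (ha1 : a < 1) :
    0 < lam ∧ υ = 0 ∧ S / c = Γ + M * (1 - a) := by
  have hx0 : x = 0 := by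
    rcases mul_eq_zero.1 hcs_x with h | h
    · exact h
    · linarith
  have hy0 : y = 0 := by
    rcases mul_eq_zero.1 hcs_y with h | h
    · exact h
    · linarith
  have hdiff : (lam - υ) * M = 1 := by rw [hx0, hy0] at hstat; linarith
  have hlu : 0 < lam - υ := by
    by_contra h
    push_neg at h
    nlinarith
  have hlampos : 0 < lam := by linarith
  have hlam0 : S / c - Γ + M * (a - 1) = 0 := by
    rcases mul_eq_zero.1 hcs_lam with h | h
    · linarith
    · exact h
  have hSc : S / c = Γ + M * (1 - a) := by linarith
  have hυ0 : υ = 0 := by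
    rcases mul_eq_zero.1 hcs_υ with h | h
    · exact h
    · exfalso; rw [hSc] at h; nlinarith
  exact ⟨hlampos, hυ0, hSc⟩
end

section
/- Lemma 1 (KKT relation, case a = 0): Let M, Γ, S, c be real numbers with M > 0 and c > 0, and let x, y, λ, υ be nonnegative real numbers satisfying the KKT conditions with a = 0: −1 + x − y + (λ − υ)·M = 0; x·(0 − 1) = 0; λ·(S/c − Γ + M·(0 − 1)) = 0; and υ·(Γ − S/c) = 0. Then x = 0, λ > 0, and S/c = Γ + M. -/
/-- Lemma 1 (KKT relation, case a = 0). -/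
theorem kkt_case_a_zero
    (M Γ S c x y lam υ : ℝ)
    (hM : 0 < M) (hc : 0 < c)
    (hx : 0 ≤ x) (hy : 0 ≤ y) (hlam : 0 ≤ lam) (hυ : 0 ≤ υ)
    (hstat : -1 + x - y + (lam - υ) * M = 0)
    (hcs_x : x * ((0 : ℝ) - 1) = 0)
    (hcs_lam : lam * (S / c - Γ + M * ((0 : ℝ) - 1)) = 0)
    (hcs_υ : υ * (Γ - S / c) = 0) :
    x = 0 ∧ 0 < lam ∧ S / c = Γ + M := by
  have hx0 : x = 0 := by nlinarith [hcs_x]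
  have hlampos : 0 < lam := by nlinarith
  have hterm : S / c - Γ + M * ((0 : ℝ) - 1) = 0 := by
    rcases mul_eq_zero.mp hcs_lam with h | h
    · exact absurd h (ne_of_gt hlampos)
    · exact h
  exact ⟨hx0, hlampos, by linarith⟩
end

section
/- Lemma 4 (CEFL descent): Let E be a complete real inner product space, I a finite index set, and f_i : E → ℝ differentiable functions for i ∈ I. Let α_i ≥ 0 with ∑_{i∈I} α_i = 1, set f = ∑_{i∈I} α_i f_i, and assume ∇f is Lipschitz continuous with constant L > 0. Fix w ∈ E, a subset S ⊆ I, and points w̃_i ∈ E for i ∈ S, and define the CEFL update w⁺ = w − (1/L)·(∑_{i∈S} α_i ∇f_i(w̃_i) + ∑_{i∈I∖S} α_i ∇f_i(w)). Then f(w⁺) ≤ f(w) − (1/(2L))·‖∇f(w)‖² + (1/(2L))·‖∑_{i∈S} α_i (∇f_i(w̃_i) − ∇f_i(w))‖². -/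
open Finset

open RealInnerProductSpace in
/-- Descent lemma: if `f` has gradient `g` everywhere and `g` is `L`-Lipschitz, then
`f y ≤ f x + ⟪g x, y - x⟫ + L/2 ‖y - x‖²`. -/
theorem cefl_descent_aux
    {E : Type*} [NormedAddCommGroup E] [InnerProductSpace ℝ E] [CompleteSpace E]
    (f : E → ℝ) (g : E → E) (hg : ∀ x, HasGradientAt f (g x) x)
    (L : ℝ) (hL : 0 ≤ L) (hlip : LipschitzWith (Real.toNNReal L) g) (x y : E) :
    f y ≤ f x + ⟪g x, y - x⟫ + L / 2 * ‖y - x‖ ^ 2 := by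
  set v := y - x with hv
  set h : ℝ → ℝ := fun t => f (x + t • v) - t * ⟪g x, v⟫ - L / 2 * t ^ 2 * ‖v‖ ^ 2 with hh
  have hφ : ∀ t : ℝ, HasDerivAt (fun t : ℝ => f (x + t • v)) ⟪g (x + t • v), v⟫ t := by
    intro t
    have hline : HasDerivAt (fun t : ℝ => x + t • v) v t := by
      simpa using ((hasDerivAt_id t).smul_const v).const_add x
    have := ((hg (x + t • v)).hasFDerivAt).comp_hasDerivAt t hline
    simp only [InnerProductSpace.toDual_apply_apply] at this
    exact this
  have hderiv : ∀ t : ℝ,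
      HasDerivAt h (⟪g (x + t • v), v⟫ - ⟪g x, v⟫ - L * t * ‖v‖ ^ 2) t := by
    intro t
    have h1 : HasDerivAt (fun t : ℝ => t * ⟪g x, v⟫) ⟪g x, v⟫ t := by
      simpa using (hasDerivAt_id t).mul_const ⟪g x, v⟫
    have h2 : HasDerivAt (fun t : ℝ => L / 2 * t ^ 2 * ‖v‖ ^ 2) (L * t * ‖v‖ ^ 2) t := by
      have := ((hasDerivAt_pow 2 t).const_mul (L / 2)).mul_const (‖v‖ ^ 2)
      exact this.congr_deriv (by ring)
    exact ((hφ t).sub h1).sub h2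
  have hanti : AntitoneOn h (Set.Icc 0 1) := by
    apply antitoneOn_of_deriv_nonpos (convex_Icc 0 1)
    · exact fun t _ => ((hderiv t).continuousAt).continuousWithinAt
    · exact fun t _ => ((hderiv t).differentiableAt).differentiableWithinAt
    · intro t ht
      rw [interior_Icc] at ht
      rw [(hderiv t).deriv]
      have hcs : ⟪g (x + t • v) - g x, v⟫ ≤ ‖g (x + t • v) - g x‖ * ‖v‖ :=
        real_inner_le_norm _ _
      have hlb : ‖g (x + t • v) - g x‖ ≤ L * (t * ‖v‖) := by
        have := hlip.dist_le_mul (x + t • v) x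
        rw [dist_eq_norm, dist_eq_norm] at this
        have h0 : (Real.toNNReal L : ℝ) = L := Real.coe_toNNReal L hL
        calc ‖g (x + t • v) - g x‖ ≤ L * ‖x + t • v - x‖ := by rw [← h0]; exact this
        _ = L * (t * ‖v‖) := by
            rw [add_sub_cancel_left, norm_smul, Real.norm_eq_abs, abs_of_pos ht.1]
      have : ⟪g (x + t • v), v⟫ - ⟪g x, v⟫ ≤ L * t * ‖v‖ ^ 2 := by
        rw [← inner_sub_left]
        calc ⟪g (x + t • v) - g x, v⟫ ≤ ‖g (x + t • v) - g x‖ * ‖v‖ := hcs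
        _ ≤ L * (t * ‖v‖) * ‖v‖ := by
            apply mul_le_mul_of_nonneg_right hlb (norm_nonneg _)
        _ = L * t * ‖v‖ ^ 2 := by ring
      linarith
  have h10 : h 1 ≤ h 0 := hanti (by norm_num) (by norm_num) zero_le_one
  simp only [hh, one_smul, zero_smul, add_zero, one_pow, mul_one, zero_pow, mul_zero,
    zero_mul, sub_zero] at h10
  have hxy : x + v = y := by rw [hv]; abel
  rw [hxy] at h10
  linarith

open RealInnerProductSpace in
/-- Lemma 4 (CEFL descent): the CEFL update, which mixes stale gradients from the
clients in `S` with fresh gradients from the remaining clients, yields a descent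
bounded by the staleness error. -/
theorem cefl_descent
    {E : Type*} [NormedAddCommGroup E] [InnerProductSpace ℝ E] [CompleteSpace E]
    {ι : Type*} [DecidableEq ι] (I : Finset ι) (fi : ι → E → ℝ) (fi' : ι → E → E)
    (α : ι → ℝ) (hα : ∀ i ∈ I, 0 ≤ α i) (hαsum : ∑ i ∈ I, α i = 1)
    (hgrad : ∀ i ∈ I, ∀ x : E, HasGradientAt (fi i) (fi' i x) x)
    (L : ℝ) (hL : 0 < L)
    (hlip : LipschitzWith (Real.toNNReal L) (fun x : E => ∑ i ∈ I, α i • fi' i x))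
    (w : E) (S : Finset ι) (hS : S ⊆ I) (wt : ι → E) :
    (∑ i ∈ I, α i * fi i
        (w - (1 / L) • (∑ i ∈ S, α i • fi' i (wt i) + ∑ i ∈ I \ S, α i • fi' i w))) ≤
      (∑ i ∈ I, α i * fi i w)
        - (1 / (2 * L)) * ‖∑ i ∈ I, α i • fi' i w‖ ^ 2
        + (1 / (2 * L)) * ‖∑ i ∈ S, α i • (fi' i (wt i) - fi' i w)‖ ^ 2 := by
  set f : E → ℝ := fun x => ∑ i ∈ I, α i * fi i x with hf
  set g : E → E := fun x => ∑ i ∈ I, α i • fi' i x with hgdef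
  have hg : ∀ x, HasGradientAt f (g x) x := by
    intro x
    have hsum : HasFDerivAt f
        (∑ i ∈ I, α i • InnerProductSpace.toDual ℝ E (fi' i x)) x := by
      apply HasFDerivAt.fun_sum
      intro i hi
      exact ((hgrad i hi x).hasFDerivAt).const_mul (α i)
    have heq : (∑ i ∈ I, α i • InnerProductSpace.toDual ℝ E (fi' i x))
        = InnerProductSpace.toDual ℝ E (g x) := by
      rw [hgdef, map_sum]
      exact Finset.sum_congr rfl fun i _ => (map_smul _ _ _).symm
    rw [heq] at hsum
    simpa using hsum.hasGradientAt
  set G : E := g w with hG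
  set e : E := ∑ i ∈ S, α i • (fi' i (wt i) - fi' i w) with he
  set y : E := w - (1 / L) • (∑ i ∈ S, α i • fi' i (wt i) + ∑ i ∈ I \ S, α i • fi' i w)
    with hy
  have hsplit : (∑ i ∈ S, α i • fi' i (wt i) + ∑ i ∈ I \ S, α i • fi' i w) = G + e := by
    have h1 : e = ∑ i ∈ S, α i • fi' i (wt i) - ∑ i ∈ S, α i • fi' i w := by
      rw [he, ← Finset.sum_sub_distrib]
      exact Finset.sum_congr rfl fun i _ => smul_sub _ _ _
    have h2 : ∑ i ∈ I \ S, α i • fi' i w + ∑ i ∈ S, α i • fi' i w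
        = ∑ i ∈ I, α i • fi' i w := Finset.sum_sdiff hS
    have hGw : G = ∑ i ∈ I, α i • fi' i w := rfl
    rw [hGw, ← h2, h1]
    abel
  have hyw : y - w = -((1 / L) • (G + e)) := by rw [hy, hsplit]; abel
  have key := cefl_descent_aux f g hg L hL.le hlip w y
  rw [hyw] at key
  have hinn : ⟪G, -((1 / L) • (G + e))⟫ = -(1 / L) * (‖G‖ ^ 2 + ⟪G, e⟫) := by
    rw [inner_neg_right, real_inner_smul_right, inner_add_right, real_inner_self_eq_norm_sq]
    ring
  have hnrm : ‖-((1 / L) • (G + e))‖ ^ 2 = (1 / L) ^ 2 * ‖G + e‖ ^ 2 := by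
    rw [norm_neg, norm_smul, mul_pow, Real.norm_eq_abs, sq_abs]
  have hGE : ‖G + e‖ ^ 2 = ‖G‖ ^ 2 + 2 * ⟪G, e⟫ + ‖e‖ ^ 2 := norm_add_sq_real G e
  rw [hinn, hnrm, hGE] at key
  have hL' : L ≠ 0 := ne_of_gt hL
  have hfinal : f w + -(1 / L) * (‖G‖ ^ 2 + ⟪G, e⟫)
      + L / 2 * ((1 / L) ^ 2 * (‖G‖ ^ 2 + 2 * ⟪G, e⟫ + ‖e‖ ^ 2))
      = f w - 1 / (2 * L) * ‖G‖ ^ 2 + 1 / (2 * L) * ‖e‖ ^ 2 := by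
    field_simp
    ring
  rw [hfinal] at key
  exact key
end

section
/- Lemma 5 (one-step contraction with bounded gradient error, deterministic form): Let E be a complete real inner product space and f : E → ℝ be differentiable with gradient ∇f Lipschitz continuous with constant L > 0. Assume f attains its minimum at w* ∈ E and satisfies the Polyak–Łojasiewicz inequality 2μ·(f(x) − f(w*)) ≤ ‖∇f(x)‖² for all x ∈ E, where μ > 0. Let ρ be a real number with 0 < ρ ≤ μ/L, let w, e ∈ E satisfy ‖e‖² ≤ 2L·(μ/L − ρ)·(f(w) − f(w*)), and set w⁺ = w − (1/L)·(∇f(w) + e). Then f(w⁺) − f(w*) ≤ (1 − ρ)·(f(w) − f(w*)). -/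
open InnerProductSpace
open scoped RealInnerProductSpace

/-- Descent lemma: an `L`-Lipschitz gradient gives a quadratic upper bound. -/
lemma descent_lemma
    {E : Type*} [NormedAddCommGroup E] [InnerProductSpace ℝ E] [CompleteSpace E]
    (f : E → ℝ) (f' : E → E) (L : ℝ) (hL : 0 < L)
    (hgrad : ∀ x : E, HasGradientAt f (f' x) x)
    (hlip : LipschitzWith (Real.toNNReal L) f')
    (w v : E) :
    f (w + v) ≤ f w + ⟪f' w, v⟫ + L / 2 * ‖v‖ ^ 2 := by
  set c : ℝ := ⟪f' w, v⟫ with hc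
  have key : ∀ t : ℝ, HasDerivAt (fun t : ℝ => f (w + t • v)) ⟪f' (w + t • v), v⟫ t := by
    intro t
    have hline : HasDerivAt (fun t : ℝ => w + t • v) v t := by
      simpa using ((hasDerivAt_id t).smul_const v).const_add w
    have := (hgrad (w + t • v)).hasFDerivAt.comp_hasDerivAt t hline
    simpa [InnerProductSpace.toDual_apply_apply, Function.comp_def] using this
  set g : ℝ → ℝ := fun t => f w + t * c + L / 2 * ‖v‖ ^ 2 * t ^ 2 - f (w + t • v) with hg
  have hg' : ∀ t : ℝ, HasDerivAt g (c + L / 2 * ‖v‖ ^ 2 * (2 * t) - ⟪f' (w + t • v), v⟫) t := by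
    intro t
    have ha : HasDerivAt (fun t : ℝ => t * c) c t := by
      simpa using (hasDerivAt_id t).mul_const c
    have hb : HasDerivAt (fun t : ℝ => L / 2 * ‖v‖ ^ 2 * t ^ 2) (L / 2 * ‖v‖ ^ 2 * (2 * t)) t := by
      simpa using (hasDerivAt_pow 2 t).const_mul (L / 2 * ‖v‖ ^ 2)
    exact ((ha.const_add (f w)).add hb).sub (key t)
  have hmono : MonotoneOn g (Set.Icc (0 : ℝ) 1) := by
    apply monotoneOn_of_deriv_nonneg (convex_Icc 0 1)
    · exact fun t _ => ((hg' t).differentiableAt.continuousAt.continuousWithinAt)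
    · exact fun t _ => ((hg' t).differentiableAt.differentiableWithinAt)
    · intro t ht
      rw [interior_Icc] at ht
      rw [(hg' t).deriv]
      have hinner : ⟪f' (w + t • v), v⟫ - c ≤ L * t * ‖v‖ ^ 2 := by
        rw [hc, ← inner_sub_left]
        calc ⟪f' (w + t • v) - f' w, v⟫ ≤ ‖f' (w + t • v) - f' w‖ * ‖v‖ :=
              real_inner_le_norm _ _
          _ ≤ (L * (t * ‖v‖)) * ‖v‖ := by
              apply mul_le_mul_of_nonneg_right _ (norm_nonneg v)
              have := hlip.dist_le_mul (w + t • v) w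
              rw [dist_eq_norm, dist_eq_norm] at this
              simpa [norm_smul, abs_of_nonneg ht.1.le, Real.coe_toNNReal _ hL.le,
                mul_assoc] using this
          _ = L * t * ‖v‖ ^ 2 := by ring
      nlinarith
  have h01 := hmono (Set.left_mem_Icc.mpr one_pos.le) (Set.right_mem_Icc.mpr one_pos.le)
    (zero_le_one)
  simp only [hg, zero_smul, add_zero, one_smul, zero_mul, mul_zero, mul_one, one_pow] at h01
  linarith

/-- Lemma 5 (one-step contraction with bounded gradient error, deterministic form). -/
theorem one_step_contraction
    {E : Type*} [NormedAddCommGroup E] [InnerProductSpace ℝ E] [CompleteSpace E]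
    (f : E → ℝ) (f' : E → E) (L : ℝ) (hL : 0 < L)
    (hgrad : ∀ x : E, HasGradientAt f (f' x) x)
    (hlip : LipschitzWith (Real.toNNReal L) f')
    (μ : ℝ) (hμ : 0 < μ) (wstar : E)
    (hmin : ∀ x : E, f wstar ≤ f x)
    (hPL : ∀ x : E, 2 * μ * (f x - f wstar) ≤ ‖f' x‖ ^ 2)
    (ρ : ℝ) (hρ0 : 0 < ρ) (hρ : ρ ≤ μ / L)
    (w e : E) (he : ‖e‖ ^ 2 ≤ 2 * L * (μ / L - ρ) * (f w - f wstar)) :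
    f (w - (1 / L) • (f' w + e)) - f wstar ≤ (1 - ρ) * (f w - f wstar) := by
  have hd := descent_lemma f f' L hL hgrad hlip w (-((1 / L) • (f' w + e)))
  rw [← sub_eq_add_neg] at hd
  have h1 : ⟪f' w, -((1 / L) • (f' w + e))⟫ = -(1 / L) * (‖f' w‖ ^ 2 + ⟪f' w, e⟫) := by
    rw [inner_neg_right, real_inner_smul_right, inner_add_right,
      real_inner_self_eq_norm_sq]
    ring
  have h2 : ‖-((1 / L) • (f' w + e))‖ ^ 2 =
      (1 / L) ^ 2 * (‖f' w‖ ^ 2 + 2 * ⟪f' w, e⟫ + ‖e‖ ^ 2) := by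
    rw [norm_neg, norm_smul, mul_pow, ← norm_add_sq_real]
    simp [abs_of_pos (by positivity : (0:ℝ) < 1 / L)]
  rw [h1, h2] at hd
  -- descent gives: f w⁺ ≤ f w - 1/(2L) ‖f' w‖² + 1/(2L) ‖e‖²
  have hstep : f (w - (1 / L) • (f' w + e)) ≤
      f w - 1 / (2 * L) * ‖f' w‖ ^ 2 + 1 / (2 * L) * ‖e‖ ^ 2 := by
    have hL' : L ≠ 0 := hL.ne'
    calc f (w - (1 / L) • (f' w + e)) ≤ _ := hd
      _ = f w - 1 / (2 * L) * ‖f' w‖ ^ 2 + 1 / (2 * L) * ‖e‖ ^ 2 := by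
          field_simp
          ring
  have hPLw := hPL w
  have hminw := hmin w
  have hμL : 0 < μ / L := div_pos hμ hL
  have e1 : μ / L * (f w - f wstar) ≤ 1 / (2 * L) * ‖f' w‖ ^ 2 := by
    have := mul_le_mul_of_nonneg_left hPLw (by positivity : (0:ℝ) ≤ 1 / (2 * L))
    calc μ / L * (f w - f wstar) = 1 / (2 * L) * (2 * μ * (f w - f wstar)) := by
          field_simp
      _ ≤ 1 / (2 * L) * ‖f' w‖ ^ 2 := this
  have e2 : 1 / (2 * L) * ‖e‖ ^ 2 ≤ (μ / L - ρ) * (f w - f wstar) := by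
    have := mul_le_mul_of_nonneg_left he (by positivity : (0:ℝ) ≤ 1 / (2 * L))
    calc 1 / (2 * L) * ‖e‖ ^ 2 ≤ 1 / (2 * L) * (2 * L * (μ / L - ρ) * (f w - f wstar)) := this
      _ = (μ / L - ρ) * (f w - f wstar) := by field_simp
  nlinarith [e1, e2, hstep]
end
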